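/- (Proposition 1) For every n ≥ 1, every fixed permutation π of {1,…,n}, and every integer h ≥ 1, the normalization constant of the triangular kernel, C(h) = Σ_{σ : T(σ,π) ≤ h} (1 − T(σ,π)/h), satisfies C(h) = Σ_{k=0}^{h} [z^k]G_n − (1/h)·Σ_{k=0}^{h−1} [z^k]G_n′, i.e. C(h) = [z^h](G_n(z)/(1−z)) − h^{−1}[z^{h−1}](G_n′(z)/(1−z)); in particular C(h) does not depend on the choice of π. -/

import Mathlib

/-- Kendall's tau distance between two permutations of `Fin n`. -/
def kendall {n : ℕ} (π σ : Equiv.Perm (Fin n)) : ℕ :=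
  (Finset.univ.filter (fun p : Fin n × Fin n =>
    p.1 < p.2 ∧ ((π p.1 < π p.2) ↔ ¬ (σ p.1 < σ p.2)))).card

/-- The generating polynomial `G_n(z) = ∏_{j=1}^{n-1} (1 + z + ⋯ + z^j)`. -/
noncomputable def genG (n : ℕ) : Polynomial ℤ :=
  ∏ j ∈ Finset.Icc 1 (n - 1), ∑ k ∈ Finset.range (j + 1), Polynomial.X ^ k

open Finset Polynomial

/-- number of inversions -/
def invn {n : ℕ} (σ : Equiv.Perm (Fin n)) : ℕ :=
  (Finset.univ.filter (fun p : Fin n × Fin n => p.1 < p.2 ∧ σ p.2 < σ p.1)).card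

lemma lt_flip {n : ℕ} (σ : Equiv.Perm (Fin n)) {a b : Fin n} (hab : a ≠ b)
    (h : ¬ σ a < σ b) : σ b < σ a :=
  (le_of_not_gt h).lt_of_ne (fun hc => hab (σ.injective hc.symm))

lemma kendall_eq {n : ℕ} (σ π : Equiv.Perm (Fin n)) :
    kendall σ π = invn (σ * π⁻¹) := by
  classical
  unfold kendall invn
  refine Finset.card_bij'
    (fun a _ => if π a.1 < π a.2 then (π a.1, π a.2) else (π a.2, π a.1))
    (fun b _ => if π⁻¹ b.1 < π⁻¹ b.2 then (π⁻¹ b.1, π⁻¹ b.2) else (π⁻¹ b.2, π⁻¹ b.1))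
    ?_ ?_ ?_ ?_
  · rintro ⟨a1, a2⟩ ha
    simp only [mem_filter, mem_univ, true_and] at ha
    obtain ⟨h12, hiff⟩ := ha
    by_cases hp : π a1 < π a2
    · dsimp only
      rw [if_pos hp]
      rw [Finset.mem_filter]
      simp only [mem_filter, mem_univ, true_and, Equiv.Perm.mul_apply,
        Equiv.Perm.coe_inv, Equiv.symm_apply_apply]
      exact ⟨hp, lt_flip σ (ne_of_lt h12) (fun hx => (hiff.mp hx) hp)⟩
    · dsimp only
      rw [if_neg hp]
      rw [Finset.mem_filter]
      simp only [mem_filter, mem_univ, true_and, Equiv.Perm.mul_apply,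
        Equiv.Perm.coe_inv, Equiv.symm_apply_apply]
      exact ⟨lt_flip π (ne_of_lt h12) hp, hiff.mpr hp⟩
  · rintro ⟨b1, b2⟩ hb
    rw [Finset.mem_filter] at hb
    simp only [mem_filter, mem_univ, true_and, Equiv.Perm.mul_apply] at hb
    obtain ⟨h12, hlt⟩ := hb
    by_cases hq : π⁻¹ b1 < π⁻¹ b2
    · dsimp only
      rw [if_pos hq]
      rw [Finset.mem_filter]
      simp only [mem_filter, mem_univ, true_and, Equiv.Perm.coe_inv, Equiv.apply_symm_apply]
      exact ⟨hq, iff_of_false (fun hx => asymm hlt hx) (not_not_intro h12)⟩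
    · dsimp only
      rw [if_neg hq]
      rw [Finset.mem_filter]
      simp only [mem_filter, mem_univ, true_and, Equiv.Perm.coe_inv, Equiv.apply_symm_apply]
      exact ⟨lt_flip π⁻¹ (ne_of_lt h12) hq, iff_of_true hlt (asymm h12)⟩
  · rintro ⟨a1, a2⟩ ha
    simp only [mem_filter, mem_univ, true_and] at ha
    by_cases hp : π a1 < π a2
    · dsimp only
      rw [if_pos hp]
      simp only [Equiv.Perm.coe_inv, Equiv.symm_apply_apply]
      rw [if_pos ha.1]
    · dsimp only
      rw [if_neg hp]
      simp only [Equiv.Perm.coe_inv, Equiv.symm_apply_apply]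
      rw [if_neg (asymm ha.1)]
  · rintro ⟨b1, b2⟩ hb
    rw [Finset.mem_filter] at hb
    simp only [mem_filter, mem_univ, true_and, Equiv.Perm.mul_apply] at hb
    by_cases hq : π⁻¹ b1 < π⁻¹ b2
    · dsimp only
      rw [if_pos hq]
      simp only [Equiv.Perm.coe_inv, Equiv.apply_symm_apply]
      rw [if_pos hb.1]
    · dsimp only
      rw [if_neg hq]
      simp only [Equiv.Perm.coe_inv, Equiv.apply_symm_apply]
      rw [if_neg (asymm hb.1)]

/-- insert value `0` at position `p` -/
def phi {n : ℕ} (p : Fin (n + 1)) (e : Equiv.Perm (Fin n)) : Equiv.Perm (Fin (n + 1)) :=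
  ((finSuccEquiv' p).trans e.optionCongr).trans (finSuccEquiv' 0).symm

lemma phi_apply_self {n : ℕ} (p : Fin (n + 1)) (e : Equiv.Perm (Fin n)) :
    phi p e p = 0 := by
  simp [phi, finSuccEquiv'_at, finSuccEquiv'_symm_none]

lemma phi_apply_succAbove {n : ℕ} (p : Fin (n + 1)) (e : Equiv.Perm (Fin n)) (i : Fin n) :
    phi p e (p.succAbove i) = (e i).succ := by
  simp [phi, finSuccEquiv'_succAbove, finSuccEquiv'_symm_some, Fin.zero_succAbove]

lemma phi_ne_zero {n : ℕ} (p : Fin (n + 1)) (e : Equiv.Perm (Fin n)) {i : Fin (n + 1)}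
    (hi : i ≠ p) : phi p e i ≠ 0 := by
  intro hc
  have := (phi p e).injective (hc.trans (phi_apply_self p e).symm)
  exact hi this

lemma invn_phi {n : ℕ} (p : Fin (n + 1)) (e : Equiv.Perm (Fin n)) :
    invn (phi p e) = (p : ℕ) + invn e := by
  classical
  unfold invn
  have hsplit := Finset.card_filter_add_card_filter_not
    (fun q : Fin (n+1) × Fin (n+1) => q.2 = p)
    (s := Finset.univ.filter
      (fun q : Fin (n+1) × Fin (n+1) => q.1 < q.2 ∧ phi p e q.2 < phi p e q.1))
  rw [← hsplit]
  congr 1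
  · -- pairs ending at p : count = p
    rw [Finset.filter_filter]
    have hset : (Finset.univ.filter
        (fun q : Fin (n+1) × Fin (n+1) =>
          (q.1 < q.2 ∧ phi p e q.2 < phi p e q.1) ∧ q.2 = p))
        = (Finset.Iio p) ×ˢ {p} := by
      ext ⟨i, j⟩
      simp only [mem_filter, mem_univ, true_and, Finset.mem_product, Finset.mem_Iio,
        Finset.mem_singleton]
      constructor
      · rintro ⟨⟨h1, _⟩, rfl⟩; exact ⟨h1, rfl⟩
      · rintro ⟨h1, hj⟩
        rw [hj]
        refine ⟨⟨h1, ?_⟩, rfl⟩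
        rw [phi_apply_self]
        exact Fin.pos_of_ne_zero (phi_ne_zero p e (ne_of_lt h1))
    rw [hset, Finset.card_product, Finset.card_singleton, Fin.card_Iio, mul_one]
  · -- pairs not ending at p : count = invn e
    rw [Finset.filter_filter]
    refine (Finset.card_bij
      (fun (a : Fin n × Fin n) _ => (p.succAbove a.1, p.succAbove a.2)) ?_ ?_ ?_).symm
    · rintro ⟨a1, a2⟩ ha
      simp only [mem_filter, mem_univ, true_and] at ha ⊢
      refine ⟨⟨Fin.succAbove_lt_succAbove_iff.mpr ha.1, ?_⟩, Fin.succAbove_ne p a2⟩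
      rw [phi_apply_succAbove, phi_apply_succAbove]
      exact Fin.succ_lt_succ_iff.mpr ha.2
    · rintro ⟨a1, a2⟩ _ ⟨b1, b2⟩ _ hab
      simp only [Prod.mk.injEq] at hab
      exact Prod.ext (Fin.succAbove_right_injective hab.1)
        (Fin.succAbove_right_injective hab.2)
    · rintro ⟨b1, b2⟩ hb
      simp only [mem_filter, mem_univ, true_and] at hb
      obtain ⟨⟨h12, hlt⟩, h2p⟩ := hb
      have h1p : b1 ≠ p := by
        intro h; subst h
        rw [phi_apply_self] at hlt
        exact (Fin.not_lt_zero _ hlt)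
      obtain ⟨a1, rfl⟩ := Fin.exists_succAbove_eq h1p
      obtain ⟨a2, rfl⟩ := Fin.exists_succAbove_eq h2p
      refine ⟨(a1, a2), ?_, rfl⟩
      simp only [mem_filter, mem_univ, true_and]
      refine ⟨Fin.succAbove_lt_succAbove_iff.mp h12, ?_⟩
      rw [phi_apply_succAbove, phi_apply_succAbove] at hlt
      exact Fin.succ_lt_succ_iff.mp hlt

lemma phi_injective {n : ℕ} :
    Function.Injective (fun pe : Fin (n + 1) × Equiv.Perm (Fin n) => phi pe.1 pe.2) := by
  rintro ⟨p, e⟩ ⟨p', e'⟩ hpe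
  simp only at hpe
  have hp : p = p' := by
    have h1 : phi p e p = 0 := phi_apply_self p e
    have h2 : phi p e p' = 0 := by rw [hpe]; exact phi_apply_self p' e'
    exact (phi p e).injective (h1.trans h2.symm)
  subst hp
  have he : e = e' := by
    ext i
    have h1 : phi p e (p.succAbove i) = (e i).succ := phi_apply_succAbove p e i
    have h2 : phi p e (p.succAbove i) = (e' i).succ := by
      rw [hpe]; exact phi_apply_succAbove p e' i
    have := h1.symm.trans h2
    exact Fin.val_eq_of_eq (Fin.succ_injective _ this)
  simp [he]

lemma genG_succ (n : ℕ) :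
    genG (n + 1) = genG n * ∑ k ∈ Finset.range (n + 1), (Polynomial.X : Polynomial ℤ) ^ k := by
  cases n with
  | zero => simp [genG]
  | succ m =>
    unfold genG
    simp only [Nat.add_sub_cancel]
    rw [show Finset.Icc 1 (m + 1) = insert (m + 1) (Finset.Icc 1 m) by
        ext x; simp [Finset.mem_Icc]; omega]
    rw [Finset.prod_insert (by simp)]
    ring

lemma mahonian (n : ℕ) :
    ∑ σ : Equiv.Perm (Fin n), (Polynomial.X : Polynomial ℤ) ^ invn σ = genG n := by
  classical
  induction n with
  | zero =>
    rw [show genG 0 = 1 by simp [genG]]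
    have h0 : ∀ σ : Equiv.Perm (Fin 0), invn σ = 0 := by
      intro σ; simp [invn]
    simp [h0]
  | succ m ih =>
    have hbij : Function.Bijective
        (fun pe : Fin (m + 1) × Equiv.Perm (Fin m) => phi pe.1 pe.2) := by
      rw [Fintype.bijective_iff_injective_and_card]
      refine ⟨phi_injective, ?_⟩
      simp [Fintype.card_perm, Nat.factorial_succ]
    calc ∑ σ : Equiv.Perm (Fin (m + 1)), (Polynomial.X : Polynomial ℤ) ^ invn σ
        = ∑ pe : Fin (m + 1) × Equiv.Perm (Fin m),
            (Polynomial.X : Polynomial ℤ) ^ ((pe.1 : ℕ) + invn pe.2) :=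
          (Fintype.sum_bijective _ hbij _ _ (fun pe => by rw [invn_phi])).symm
      _ = ∑ p : Fin (m + 1), (Polynomial.X : Polynomial ℤ) ^ (p : ℕ) *
            ∑ e : Equiv.Perm (Fin m), (Polynomial.X : Polynomial ℤ) ^ invn e := by
          rw [Fintype.sum_prod_type]
          exact Finset.sum_congr rfl fun pfin _ => by
            rw [Finset.mul_sum]
            exact Finset.sum_congr rfl fun e _ => by rw [pow_add]
      _ = genG (m + 1) := by
          rw [← Finset.sum_mul, ih, genG_succ, mul_comm]
          congr 1
          exact Fin.sum_univ_eq_sum_range (fun k => (Polynomial.X : Polynomial ℤ) ^ k) (m + 1)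

lemma coeff_genG (n k : ℕ) :
    (genG n).coeff k =
      ((Finset.univ.filter (fun σ : Equiv.Perm (Fin n) => invn σ = k)).card : ℤ) := by
  classical
  rw [← mahonian n, Polynomial.finset_sum_coeff]
  simp only [Polynomial.coeff_X_pow]
  rw [Finset.card_filter]
  push_cast
  simp [eq_comm]

theorem triangular_kernel_normalization (n : ℕ) (hn : 1 ≤ n)
    (π : Equiv.Perm (Fin n)) (h : ℕ) (hh : 1 ≤ h) :
    (∑ σ ∈ Finset.univ.filter
        (fun σ : Equiv.Perm (Fin n) => kendall σ π ≤ h),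
        (1 - (kendall σ π : ℚ) / (h : ℚ)))
      = (∑ k ∈ Finset.range (h + 1), ((genG n).coeff k : ℚ))
        - (1 / (h : ℚ)) *
          ∑ k ∈ Finset.range h, ((Polynomial.derivative (genG n)).coeff k : ℚ) := by
  classical
  have hh0 : (h : ℚ) ≠ 0 := Nat.cast_ne_zero.mpr (by omega)
  have step1 : (∑ σ ∈ Finset.univ.filter
        (fun σ : Equiv.Perm (Fin n) => kendall σ π ≤ h),
        (1 - (kendall σ π : ℚ) / (h : ℚ)))
      = ∑ τ ∈ Finset.univ.filter (fun τ : Equiv.Perm (Fin n) => invn τ ≤ h),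
        (1 - (invn τ : ℚ) / (h : ℚ)) := by
    refine Finset.sum_equiv (Equiv.mulRight π⁻¹) ?_ ?_
    · intro σ
      simp [kendall_eq]
    · intro σ _
      simp [kendall_eq]
  rw [step1]
  have step2 : (∑ τ ∈ Finset.univ.filter (fun τ : Equiv.Perm (Fin n) => invn τ ≤ h),
        (1 - (invn τ : ℚ) / (h : ℚ)))
      = ∑ k ∈ Finset.range (h + 1),
          ((Finset.univ.filter (fun τ : Equiv.Perm (Fin n) => invn τ = k)).card : ℚ)
            * (1 - (k : ℚ) / (h : ℚ)) := by
    rw [← Finset.sum_fiberwise_of_maps_to (g := invn)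
      (t := Finset.range (h + 1)) (fun τ hτ => by
        simp only [Finset.mem_filter, Finset.mem_univ, true_and] at hτ
        simpa [Finset.mem_range] using Nat.lt_succ_of_le hτ)]
    refine Finset.sum_congr rfl fun k hk => ?_
    have hk' : k ≤ h := by simpa [Nat.lt_succ_iff] using hk
    have hfe : (Finset.univ.filter (fun τ : Equiv.Perm (Fin n) => invn τ ≤ h)).filter
        (fun τ => invn τ = k)
        = Finset.univ.filter (fun τ : Equiv.Perm (Fin n) => invn τ = k) := by
      rw [Finset.filter_filter]
      refine Finset.filter_congr fun τ _ => ?_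
      constructor
      · exact fun hx => hx.2
      · exact fun hx => ⟨hx ▸ hk', hx⟩
    rw [hfe]
    rw [Finset.sum_congr rfl (fun τ hτ => by
      simp only [Finset.mem_filter, Finset.mem_univ, true_and] at hτ
      rw [hτ])]
    rw [Finset.sum_const, nsmul_eq_mul]
  rw [step2]
  have hcoeff : ∀ k, ((genG n).coeff k : ℚ)
      = ((Finset.univ.filter (fun τ : Equiv.Perm (Fin n) => invn τ = k)).card : ℚ) := by
    intro k; rw [coeff_genG]; push_cast; ring
  have hderiv : ∀ k, ((Polynomial.derivative (genG n)).coeff k : ℚ)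
      = ((genG n).coeff (k + 1) : ℚ) * ((k : ℚ) + 1) := by
    intro k; rw [Polynomial.coeff_derivative]; push_cast; ring
  rw [Finset.sum_congr rfl fun k _ => hderiv k]
  have hshift : ∑ k ∈ Finset.range h, ((genG n).coeff (k + 1) : ℚ) * ((k : ℚ) + 1)
      = ∑ k ∈ Finset.range (h + 1), ((genG n).coeff k : ℚ) * (k : ℚ) := by
    rw [Finset.sum_range_succ' (fun k => ((genG n).coeff k : ℚ) * (k : ℚ)) h]
    simp only [Nat.cast_zero, mul_zero, add_zero]
    refine Finset.sum_congr rfl fun k _ => ?_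
    push_cast; ring
  rw [hshift, Finset.mul_sum, ← Finset.sum_sub_distrib]
  refine Finset.sum_congr rfl fun k _ => ?_
  rw [hcoeff k]
  ring
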